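/- A proper order filter F on D = M →₀ ℕ is a prime filter if and only if F is contained in exactly one maximal filter on D; and when F is prime, the unique maximal filter containing F is Ch(Supp(F)). -/

import Mathlib

/-- An order filter on a lattice `P`: a nonempty subset that is upward closed and
closed under binary meets. -/
def IsOrderFilter {P : Type*} [Lattice P] (F : Set P) : Prop :=
  F.Nonempty ∧ (∀ a ∈ F, ∀ b : P, a ≤ b → b ∈ F) ∧ (∀ a ∈ F, ∀ b ∈ F, a ⊓ b ∈ F)

/-- A prime order filter on a lattice `P`: a proper order filter `F` such that
`a ⊔ b ∈ F` implies `a ∈ F` or `b ∈ F`. -/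
def IsPrimeOrderFilter {P : Type*} [Lattice P] (F : Set P) : Prop :=
  IsOrderFilter F ∧ F ≠ Set.univ ∧ ∀ a b : P, a ⊔ b ∈ F → a ∈ F ∨ b ∈ F

/-- A maximal order filter on a lattice `P`: a proper order filter that is maximal
under inclusion among proper order filters. -/
def IsMaximalOrderFilter {P : Type*} [Lattice P] (F : Set P) : Prop :=
  IsOrderFilter F ∧ F ≠ Set.univ ∧
    ∀ G : Set P, IsOrderFilter G → G ≠ Set.univ → F ⊆ G → G = F

/-- The characteristic function `ch S : M →₀ ℕ` of a finite set `S`,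
with `(ch S) m = 1` if `m ∈ S` and `0` otherwise. -/
noncomputable def chFun {M : Type*} (S : Finset M) : M →₀ ℕ :=
  Finsupp.indicator S (fun _ _ => 1)

/-- `Supp F = {supp f | f ∈ F}`, where `supp f = {m | f m ≠ 0}` is the support of
a finitely supported function `f : M →₀ ℕ`. -/
def SuppFilter {M : Type*} (F : Set (M →₀ ℕ)) : Set (Finset M) :=
  Finsupp.support '' F

/-- `Ch 𝒮 = {f : M →₀ ℕ | ∃ S ∈ 𝒮, ch S ≤ f}`. -/
noncomputable def ChFilter {M : Type*} (𝒮 : Set (Finset M)) : Set (M →₀ ℕ) :=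
  {f : M →₀ ℕ | ∃ S ∈ 𝒮, chFun S ≤ f}

section Aux

variable {M : Type*}

/-- Weight of a finsupp. -/
noncomputable def fwt (f : M →₀ ℕ) : ℕ := ∑ x ∈ f.support, f x

lemma eq_of_le_of_fwt_le {a b : M →₀ ℕ} (hab : a ≤ b) (h : fwt b ≤ fwt a) : a = b := by
  classical
  have hsub : a.support ⊆ b.support := Finsupp.support_mono hab
  have ha : fwt a = ∑ x ∈ b.support, a x :=
    Finset.sum_subset hsub (fun x _ hx => Finsupp.notMem_support_iff.mp hx)
  have hle : ∀ x ∈ b.support, a x ≤ b x := fun x _ => Finsupp.le_def.mp hab x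
  have hsum : ∑ x ∈ b.support, a x = ∑ x ∈ b.support, b x :=
    le_antisymm (Finset.sum_le_sum hle) (by rw [← ha]; exact h)
  have heq := (Finset.sum_eq_sum_iff_of_le hle).mp hsum
  ext x
  by_cases hx : x ∈ b.support
  · exact heq x hx
  · have hb : b x = 0 := Finsupp.notMem_support_iff.mp hx
    have := Finsupp.le_def.mp hab x
    omega

/-- Every order filter on `M →₀ ℕ` has a minimum element. -/
lemma filter_exists_min {F : Set (M →₀ ℕ)} (hF : IsOrderFilter F) :
    ∃ g ∈ F, ∀ h ∈ F, g ≤ h := by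
  classical
  obtain ⟨f, hf⟩ := hF.1
  have hP : ∃ n, ∃ h ∈ F, fwt h = n := ⟨fwt f, f, hf, rfl⟩
  obtain ⟨g, hg, hwg⟩ := Nat.find_spec hP
  refine ⟨g, hg, fun h hh => ?_⟩
  have hmem : g ⊓ h ∈ F := hF.2.2 g hg h hh
  have hmin : Nat.find hP ≤ fwt (g ⊓ h) := Nat.find_min' hP ⟨g ⊓ h, hmem, rfl⟩
  have heq : g ⊓ h = g := eq_of_le_of_fwt_le inf_le_left (by omega)
  calc g = g ⊓ h := heq.symm
    _ ≤ h := inf_le_right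

lemma isOrderFilter_Ici {P : Type*} [Lattice P] (g : P) : IsOrderFilter (Set.Ici g) :=
  ⟨⟨g, le_refl g⟩, fun _ ha b hab => le_trans ha hab, fun _ ha _ hb => le_inf ha hb⟩

lemma filter_eq_Ici {F : Set (M →₀ ℕ)} (hF : IsOrderFilter F) {g : M →₀ ℕ}
    (hg : g ∈ F) (hmin : ∀ h ∈ F, g ≤ h) : F = Set.Ici g := by
  ext h
  exact ⟨fun hh => hmin h hh, fun hh => hF.2.1 g hg h hh⟩

lemma filter_univ_iff {F : Set (M →₀ ℕ)} (hF : IsOrderFilter F) :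
    F = Set.univ ↔ (0 : M →₀ ℕ) ∈ F := by
  constructor
  · intro h; rw [h]; trivial
  · intro h; ext f; simp only [Set.mem_univ, iff_true]
    exact hF.2.1 0 h f zero_le

lemma single_apply' [DecidableEq M] (m x : M) (k : ℕ) :
    (Finsupp.single m k) x = if x = m then k else 0 := by
  classical rw [Finsupp.single_apply]; congr 1; exact propext ⟨Eq.symm, Eq.symm⟩

lemma le_single_one [DecidableEq M] {m : M} {h : M →₀ ℕ}
    (hle : h ≤ Finsupp.single m 1) (h0 : h ≠ 0) : h = Finsupp.single m 1 := by
  have hpt : ∀ x, h x ≤ (Finsupp.single m 1) x := Finsupp.le_def.mp hle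
  have hm : h m = 1 := by
    by_contra hc
    apply h0
    ext x
    rcases eq_or_ne x m with rfl | hx
    · have := hpt x; rw [single_apply', if_pos rfl] at this; simp; omega
    · have := hpt x; rw [single_apply', if_neg hx] at this; simpa using this
  ext x
  rcases eq_or_ne x m with rfl | hx
  · rw [single_apply', if_pos rfl, hm]
  · have := hpt x; rw [single_apply', if_neg hx] at this
    rw [single_apply', if_neg hx]; omega

/-- `Set.Ici (single m 1)` is a maximal order filter on `M →₀ ℕ`. -/
lemma maximal_Ici_single [DecidableEq M] (m : M) :
    IsMaximalOrderFilter (Set.Ici (Finsupp.single m (1 : ℕ))) := by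
  refine ⟨isOrderFilter_Ici _, ?_, ?_⟩
  · intro h
    have h0 : (0 : M →₀ ℕ) ∈ Set.Ici (Finsupp.single m (1 : ℕ)) := by rw [h]; trivial
    have : Finsupp.single m (1 : ℕ) = 0 := le_antisymm h0 zero_le
    exact one_ne_zero (Finsupp.single_eq_zero.mp this)
  · intro G hG hGne hsub
    obtain ⟨g', hg'G, hg'min⟩ := filter_exists_min hG
    have hGeq : G = Set.Ici g' := filter_eq_Ici hG hg'G hg'min
    have hg'0 : g' ≠ 0 := by
      intro h
      exact hGne ((filter_univ_iff hG).mpr (h ▸ hg'G))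
    have hle : g' ≤ Finsupp.single m 1 := hg'min _ (hsub (Set.self_mem_Ici))
    rw [hGeq, le_single_one hle hg'0]

end Aux

/-- A proper order filter `F` on `D = M →₀ ℕ` is prime iff `F` is contained in
exactly one maximal filter on `D`; when `F` is prime, the unique maximal filter
containing `F` is `Ch (Supp F)`. -/
theorem isPrime_iff_unique_maximal (M : Type*) [DecidableEq M]
    (F : Set (M →₀ ℕ)) (hF : IsOrderFilter F) (hproper : F ≠ Set.univ) :
    (IsPrimeOrderFilter F ↔
      (∃! G : Set (M →₀ ℕ), IsMaximalOrderFilter G ∧ F ⊆ G)) ∧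
    (IsPrimeOrderFilter F →
      IsMaximalOrderFilter (ChFilter (SuppFilter F)) ∧
      F ⊆ ChFilter (SuppFilter F) ∧
      ∀ G : Set (M →₀ ℕ), IsMaximalOrderFilter G → F ⊆ G →
        G = ChFilter (SuppFilter F)) := by
  classical
  obtain ⟨g, hgF, hgmin⟩ := filter_exists_min hF
  have hg0 : g ≠ 0 := by
    intro h
    exact hproper ((filter_univ_iff hF).mpr (h ▸ hgF))
  have chap : ∀ (S : Finset M) (x : M), chFun S x = if x ∈ S then 1 else 0 := by
    intro S x; simp [chFun, Finsupp.indicator_apply]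
  -- single m 1 ≤ g for m in the support of g
  have hsle : ∀ m ∈ g.support, Finsupp.single m (1 : ℕ) ≤ g := by
    intro m hm
    rw [Finsupp.le_def]
    intro x
    rw [single_apply']
    split
    · next hx =>
        subst hx
        have := Finsupp.mem_support_iff.mp hm
        omega
    · exact Nat.zero_le _
  have hsubF : ∀ m ∈ g.support, F ⊆ Set.Ici (Finsupp.single m (1 : ℕ)) :=
    fun m hm f hf => le_trans (hsle m hm) (hgmin f hf)
  -- prime implies singleton support
  have hp2s : IsPrimeOrderFilter F → ∃ m, g.support = {m} := by
    intro hp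
    obtain ⟨m, hm⟩ := Finsupp.support_nonempty_iff.mpr hg0
    refine ⟨m, Finset.eq_singleton_iff_unique_mem.mpr ⟨hm, fun m' hm' => ?_⟩⟩
    by_contra hne
    have hab : g ≤ g.erase m' ⊔ Finsupp.single m' (g m') := by
      rw [Finsupp.le_def]
      intro x
      rw [Finsupp.sup_apply]
      rcases eq_or_ne x m' with rfl | hx
      · rw [single_apply', if_pos rfl]; exact le_max_right _ _
      · rw [Finsupp.erase_ne hx]; exact le_max_left _ _
    have hmem : g.erase m' ⊔ Finsupp.single m' (g m') ∈ F := hF.2.1 g hgF _ hab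
    rcases hp.2.2 _ _ hmem with h | h
    · have := Finsupp.le_def.mp (hgmin _ h) m'
      rw [Finsupp.erase_same] at this
      exact Finsupp.mem_support_iff.mp hm' (by omega)
    · have := Finsupp.le_def.mp (hgmin _ h) m
      rw [single_apply', if_neg (fun e => hne e.symm)] at this
      exact Finsupp.mem_support_iff.mp hm (by omega)
  -- singleton support implies prime
  have hs2p : (∃ m, g.support = {m}) → IsPrimeOrderFilter F := by
    rintro ⟨m, hm⟩
    refine ⟨hF, hproper, fun a b hab => ?_⟩
    have hgle : ∀ h : M →₀ ℕ, g m ≤ h m → g ≤ h := by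
      intro h hh
      rw [Finsupp.le_def]
      intro x
      rcases eq_or_ne x m with rfl | hx
      · exact hh
      · have : g x = 0 := Finsupp.notMem_support_iff.mp (by rw [hm]; simp [hx])
        omega
    have := Finsupp.le_def.mp (hgmin _ hab) m
    rw [Finsupp.sup_apply] at this
    rcases le_sup_iff.mp this with h | h
    · exact Or.inl (hF.2.1 g hgF a (hgle a h))
    · exact Or.inr (hF.2.1 g hgF b (hgle b h))
  -- Ch (Supp F) = Ici (single m 1) when supp g = {m}
  have hCh : ∀ m, g.support = {m} →
      ChFilter (SuppFilter F) = Set.Ici (Finsupp.single m (1 : ℕ)) := by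
    intro m hm
    have hgm : g m ≠ 0 := Finsupp.mem_support_iff.mp (by rw [hm]; simp)
    ext f
    simp only [ChFilter, SuppFilter, Set.mem_setOf_eq, Set.mem_image, Set.mem_Ici]
    constructor
    · rintro ⟨S, ⟨h, hhF, rfl⟩, hle⟩
      rw [Finsupp.le_def]
      intro x
      rw [single_apply']
      split
      · next hx =>
          subst hx
          have h2 := Finsupp.le_def.mp (hgmin h hhF) x
          have h4 : x ∈ h.support := Finsupp.mem_support_iff.mpr (by omega)
          have := Finsupp.le_def.mp hle x
          rw [chap, if_pos h4] at this
          exact this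
      · exact Nat.zero_le _
    · intro hf
      refine ⟨g.support, ⟨g, hgF, rfl⟩, ?_⟩
      rw [Finsupp.le_def]
      intro x
      rw [chap, hm]
      by_cases hx : x ∈ ({m} : Finset M)
      · rw [if_pos hx]
        have hxm : x = m := Finset.mem_singleton.mp hx
        subst hxm
        have := Finsupp.le_def.mp hf x
        rw [single_apply', if_pos rfl] at this
        exact this
      · rw [if_neg hx]; exact Nat.zero_le _
  -- uniqueness of the maximal filter containing F, when supp g = {m}
  have huniqG : ∀ m, g.support = {m} → ∀ G : Set (M →₀ ℕ),
      IsMaximalOrderFilter G → F ⊆ G → G = Set.Ici (Finsupp.single m (1 : ℕ)) := by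
    intro m hm G hG hFG
    obtain ⟨g', hg'G, hg'min⟩ := filter_exists_min hG.1
    have hGeq : G = Set.Ici g' := filter_eq_Ici hG.1 hg'G hg'min
    have hg'0 : g' ≠ 0 := by
      intro h
      exact hG.2.1 ((filter_univ_iff hG.1).mpr (h ▸ hg'G))
    have hg'le : g' ≤ g := hg'min g (hFG hgF)
    -- g' is supported in {m}, and nonzero, hence single m 1 ≤ g'
    have hone : Finsupp.single m (1 : ℕ) ≤ g' := by
      have hz : ∀ x, x ≠ m → g' x = 0 := by
        intro x hx
        have h1 := Finsupp.le_def.mp hg'le x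
        have h2 : g x = 0 := Finsupp.notMem_support_iff.mp (by rw [hm]; simp [hx])
        omega
      have hgm' : g' m ≠ 0 := by
        intro h
        apply hg'0
        ext x
        rcases eq_or_ne x m with rfl | hx
        · simpa using h
        · simpa using hz x hx
      rw [Finsupp.le_def]
      intro x
      rw [single_apply']
      split
      · next hx => subst hx; omega
      · exact Nat.zero_le _
    have hGsub : G ⊆ Set.Ici (Finsupp.single m (1 : ℕ)) := by
      rw [hGeq]
      intro f hf
      exact le_trans hone hf
    have := hG.2.2 _ (isOrderFilter_Ici _) (maximal_Ici_single m).2.1 hGsub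
    rw [← this]
  -- assemble
  constructor
  · constructor
    · intro hp
      obtain ⟨m, hm⟩ := hp2s hp
      exact ⟨Set.Ici (Finsupp.single m (1 : ℕ)),
        ⟨maximal_Ici_single m, hsubF m (by rw [hm]; simp)⟩,
        fun G hG => huniqG m hm G hG.1 hG.2⟩
    · rintro ⟨G, ⟨hGm, hFG⟩, huniq⟩
      apply hs2p
      obtain ⟨m, hm⟩ := Finsupp.support_nonempty_iff.mpr hg0
      refine ⟨m, Finset.eq_singleton_iff_unique_mem.mpr ⟨hm, fun m' hm' => ?_⟩⟩
      have h1 : Set.Ici (Finsupp.single m (1 : ℕ)) = G :=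
        huniq _ ⟨maximal_Ici_single m, hsubF m hm⟩
      have h2 : Set.Ici (Finsupp.single m' (1 : ℕ)) = G :=
        huniq _ ⟨maximal_Ici_single m', hsubF m' hm'⟩
      have h3 : Finsupp.single m (1 : ℕ) ≤ Finsupp.single m' 1 := by
        have : Finsupp.single m' (1 : ℕ) ∈ Set.Ici (Finsupp.single m (1 : ℕ)) := by
          rw [h1, ← h2]; exact Set.self_mem_Ici
        exact this
      have := Finsupp.le_def.mp h3 m
      rw [single_apply', if_pos rfl, single_apply'] at this
      by_contra hne
      rw [if_neg (fun e : m = m' => hne e.symm)] at this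
      omega
  · intro hp
    obtain ⟨m, hm⟩ := hp2s hp
    rw [hCh m hm]
    exact ⟨maximal_Ici_single m, hsubF m (by rw [hm]; simp),
      fun G hG hFG => huniqG m hm G hG hFG⟩
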